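/- CP factorization of convolution: let X : ℤ × ℤ × Fin C → ℝ be an input, Ũ : Fin I × Fin Γ → ℝ, Ṽ : Fin J × Fin Γ → ℝ, W̃ : Fin C × Fin Γ → ℝ, S̃ : Fin C' × Fin Γ → ℝ parameters, S ≥ 1 a stride and P a padding. Define the CP kernel T^CP(i,j,c,c') = Σ_{γ ∈ Fin Γ} Ũ(i,γ) Ṽ(j,γ) W̃(c,γ) S̃(c',γ). Define Y(h,w,γ) = Σ_c W̃(c,γ) X(h,w,c); then Z₁(h',w,γ) = Σ_{i ∈ Fin I} Ũ(i,γ) Y((h'−1)S+i−P, w, γ); then Z₂(h',w',γ) = Σ_{j ∈ Fin J} Ṽ(j,γ) Z₁(h', (w'−1)S+j−P, γ); then Z(h',w',c') = Σ_γ S̃(c',γ) Z₂(h',w',γ). Then for all h', w' ∈ ℤ and c' ∈ Fin C', Z(h',w',c') = Σ_{i,j,c} T^CP(i,j,c,c') X((h'−1)S+i−P, (w'−1)S+j−P, c); i.e., convolution with the CP kernel equals a 1×1 convolution, then a depthwise vertical I×1 convolution, then a depthwise horizontal 1×J convolution, then a 1×1 convolution. -/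
import Mathlib


open scoped BigOperators

/-- CP factorization of convolution: convolution with the CP kernel
`T^CP(i,j,c,c') = Σ_γ Ut(i,γ) Vt(j,γ) Wt(c,γ) St(c',γ)` (stride `S ≥ 1`, padding `P`)
equals a 1×1 convolution with `Wt`, a depthwise vertical `I×1` convolution with `Ut`, a
depthwise horizontal `1×J` convolution with `Vt`, and a 1×1 convolution with `St`. -/
theorem cp_factorization {I J Γ C C' : ℕ} (S P : ℤ) (hS : 1 ≤ S)
    (X : ℤ → ℤ → Fin C → ℝ)
    (Ut : Fin I → Fin Γ → ℝ) (Vt : Fin J → Fin Γ → ℝ)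
    (Wt : Fin C → Fin Γ → ℝ) (St : Fin C' → Fin Γ → ℝ)
    (Tcp : Fin I → Fin J → Fin C → Fin C' → ℝ)
    (hTcp : ∀ i j c c', Tcp i j c c' = ∑ γ : Fin Γ, Ut i γ * Vt j γ * Wt c γ * St c' γ)
    (Y : ℤ → ℤ → Fin Γ → ℝ)
    (hY : ∀ h w γ, Y h w γ = ∑ c : Fin C, Wt c γ * X h w c)
    (Z₁ : ℤ → ℤ → Fin Γ → ℝ)
    (hZ₁ : ∀ h' w γ, Z₁ h' w γ =
      ∑ i : Fin I, Ut i γ * Y ((h' - 1) * S + ((i : ℕ) : ℤ) - P) w γ)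
    (Z₂ : ℤ → ℤ → Fin Γ → ℝ)
    (hZ₂ : ∀ h' w' γ, Z₂ h' w' γ =
      ∑ j : Fin J, Vt j γ * Z₁ h' ((w' - 1) * S + ((j : ℕ) : ℤ) - P) γ)
    (Z : ℤ → ℤ → Fin C' → ℝ)
    (hZ : ∀ h' w' c', Z h' w' c' = ∑ γ : Fin Γ, St c' γ * Z₂ h' w' γ) :
    ∀ (h' w' : ℤ) (c' : Fin C'),
      Z h' w' c' =
        ∑ i : Fin I, ∑ j : Fin J, ∑ c : Fin C,
          Tcp i j c c' *
            X ((h' - 1) * S + ((i : ℕ) : ℤ) - P) ((w' - 1) * S + ((j : ℕ) : ℤ) - P) c := by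
  intro h' w' c'
  simp only [hZ, hZ₂, hZ₁, hY, hTcp, Finset.mul_sum, Finset.sum_mul]
  conv_lhs => rw [Finset.sum_comm]
  conv_lhs => enter [2, j]; rw [Finset.sum_comm]
  conv_lhs => enter [2, j, 2, i]; rw [Finset.sum_comm]
  conv_lhs => rw [Finset.sum_comm]
  refine Finset.sum_congr rfl fun i _ => Finset.sum_congr rfl fun j _ =>
    Finset.sum_congr rfl fun c _ => Finset.sum_congr rfl fun γ _ => by ring
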